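/- Let f ∈ L^1(T) satisfy, for some p > 1, ∑_{|k| ≥ n+1} |f̂(k)|^p = O(1/n^{p-1}) as n → ∞. If the Cesàro means σ_n(x,f) converge uniformly on a subset K of T, then the symmetric partial sums S_n(x,f) converge uniformly on the closure of K. -/

import Mathlib

open MeasureTheory Filter Topology AddCircle

set_option maxHeartbeats 1000000 in
instance fact_two_pi_pos : Fact (0 < 2 * Real.pi) := ⟨Real.two_pi_pos⟩

noncomputable def Spart (f : AddCircle (2 * Real.pi) → ℂ) (n : ℕ)
    (x : AddCircle (2 * Real.pi)) : ℂ :=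
  ∑ k ∈ Finset.Icc (-(n : ℤ)) (n : ℤ), fourierCoeff f k • fourier k x

noncomputable def Ppart (f : AddCircle (2 * Real.pi) → ℂ) (n : ℕ)
    (x : AddCircle (2 * Real.pi)) : ℂ :=
  ∑ i ∈ Finset.range (n + 1), Spart f i x

lemma holder_card {ι : Type*} (s : Finset ι) (c : ι → ℝ) (hc : ∀ i, 0 ≤ c i) {p : ℝ}
    (hp : 1 < p) :
    ∑ i ∈ s, c i ≤ (s.card : ℝ) ^ (1 - p⁻¹) * (∑ i ∈ s, c i ^ p) ^ p⁻¹ := by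
  have := Real.inner_le_weight_mul_Lp_of_nonneg s hp.le (fun _ => 1) c (fun _ => zero_le_one) hc
  simpa using this

lemma card_annulus (n d : ℕ) :
    ((Finset.Icc (-(n + d : ℤ)) (n + d)) \ (Finset.Icc (-(n : ℤ)) n)).card = 2 * d := by
  have hsub : Finset.Icc (-(n : ℤ)) n ⊆ Finset.Icc (-(n + d : ℤ)) (n + d) :=
    Finset.Icc_subset_Icc (by omega) (by omega)
  rw [Finset.card_sdiff_of_subset hsub, Int.card_Icc, Int.card_Icc]
  omega

lemma rpow_bound {p M E lam : ℝ} (hp : 1 < p) (hM : 0 < M) (hE : 0 < E)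
    (hlam : lam = E ^ (p / (p - 1)) / 4) {n d : ℝ} (hn : 1 ≤ n) (hd : 0 < d)
    (hdh : d ≤ 2 * (lam * n)) :
    (2 * d) ^ (1 - p⁻¹) * (M / n ^ (p - 1)) ^ p⁻¹ ≤ M ^ p⁻¹ * E := by
  have hp0 : (0 : ℝ) < p := lt_trans one_pos hp
  have hp1 : (0 : ℝ) < p - 1 := by linarith
  have hn0 : (0 : ℝ) < n := lt_of_lt_of_le one_pos hn
  have hq0 : (0 : ℝ) ≤ 1 - p⁻¹ := by
    have : p⁻¹ < 1 := by rw [inv_lt_one_iff₀]; right; exact hp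
    linarith
  have hlam0 : 0 < lam := by
    rw [hlam]; positivity
  have h4lam : 4 * lam = E ^ (p / (p - 1)) := by rw [hlam]; ring
  have h4lamE : (4 * lam) ^ (1 - p⁻¹) = E := by
    rw [h4lam, ← Real.rpow_mul hE.le]
    have : p / (p - 1) * (1 - p⁻¹) = 1 := by field_simp
    rw [this, Real.rpow_one]
  have hexp : (p - 1) * p⁻¹ = 1 - p⁻¹ := by field_simp
  have step1 : (2 * d) ^ (1 - p⁻¹) ≤ (4 * lam) ^ (1 - p⁻¹) * n ^ (1 - p⁻¹) := by
    rw [← Real.mul_rpow (by positivity) hn0.le]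
    exact Real.rpow_le_rpow (by positivity) (by nlinarith) hq0
  have step2 : (M / n ^ (p - 1)) ^ p⁻¹ = M ^ p⁻¹ / n ^ (1 - p⁻¹) := by
    rw [Real.div_rpow hM.le (by positivity), ← Real.rpow_mul hn0.le, hexp]
  have hnpow : (0 : ℝ) < n ^ (1 - p⁻¹) := Real.rpow_pos_of_pos hn0 _
  calc (2 * d) ^ (1 - p⁻¹) * (M / n ^ (p - 1)) ^ p⁻¹
      ≤ ((4 * lam) ^ (1 - p⁻¹) * n ^ (1 - p⁻¹)) * (M ^ p⁻¹ / n ^ (1 - p⁻¹)) := by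
        rw [step2]
        exact mul_le_mul_of_nonneg_right step1 (by positivity)
    _ = M ^ p⁻¹ * E := by
        rw [h4lamE]; field_simp

set_option maxHeartbeats 2000000 in
theorem hardy_tauberian_uniform_convergence_on_closure
    (f : AddCircle (2 * Real.pi) → ℂ)
    (hf : Integrable f haarAddCircle)
    (p : ℝ) (hp : 1 < p)
    (hSummable : Summable fun k : ℤ => ‖fourierCoeff f k‖ ^ p)
    (htail : ∃ M : ℝ, 0 < M ∧ ∃ n₀ : ℕ, ∀ n : ℕ, n₀ ≤ n →
        (∑' k : {k : ℤ // (n : ℤ) + 1 ≤ |k|}, ‖fourierCoeff f (k : ℤ)‖ ^ p)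
          ≤ M / (n : ℝ) ^ (p - 1))
    (K : Set (AddCircle (2 * Real.pi))) (g : AddCircle (2 * Real.pi) → ℂ)
    (hσ : TendstoUniformlyOn
      (fun (n : ℕ) (x : AddCircle (2 * Real.pi)) =>
        ((n : ℂ) + 1)⁻¹ • ∑ i ∈ Finset.range (n + 1),
          ∑ k ∈ Finset.Icc (-(i : ℤ)) (i : ℤ), fourierCoeff f k • fourier k x)
      g atTop K) :
    ∃ h : AddCircle (2 * Real.pi) → ℂ,
      TendstoUniformlyOn
        (fun (n : ℕ) (x : AddCircle (2 * Real.pi)) =>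
          ∑ k ∈ Finset.Icc (-(n : ℤ)) (n : ℤ), fourierCoeff f k • fourier k x)
        h atTop (closure K) := by
  classical
  obtain ⟨M, hM, n₀, htail⟩ := htail
  have hp0 : (0 : ℝ) < p := lt_trans one_pos hp
  have hpinv : (0 : ℝ) < p⁻¹ := inv_pos.mpr hp0
  -- continuity of the partial sums
  have hcont : ∀ n, Continuous (Spart f n) := by
    intro n
    exact continuous_finset_sum _ fun k _ => (map_continuous (fourier k)).const_smul (fourierCoeff f k)
  -- p-sum tail bound on finsets
  have hsum_p : ∀ n : ℕ, n₀ ≤ n → ∀ s : Finset ℤ, (∀ k ∈ s, (n : ℤ) + 1 ≤ |k|) →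
      ∑ k ∈ s, ‖fourierCoeff f k‖ ^ p ≤ M / (n : ℝ) ^ (p - 1) := by
    intro n hn s hs
    have h1 : ∑ k ∈ s, ‖fourierCoeff f k‖ ^ p
        = ∑ k ∈ s.subtype (fun k => (n : ℤ) + 1 ≤ |k|), ‖fourierCoeff f (k : ℤ)‖ ^ p :=
      (Finset.sum_subtype_of_mem _ hs).symm
    rw [h1]
    refine le_trans (Summable.sum_le_tsum _
      (fun k _ => Real.rpow_nonneg (norm_nonneg _) p) ?_) (htail n hn)
    exact hSummable.subtype _
  -- annulus ℓ¹ bound via Hölder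
  have hannulus : ∀ n d : ℕ, n₀ ≤ n →
      ∑ k ∈ (Finset.Icc (-(n + d : ℤ)) (n + d)) \ (Finset.Icc (-(n : ℤ)) n),
          ‖fourierCoeff f k‖
        ≤ (2 * (d : ℝ)) ^ (1 - p⁻¹) * (M / (n : ℝ) ^ (p - 1)) ^ p⁻¹ := by
    intro n d hn
    set s := (Finset.Icc (-(n + d : ℤ)) (n + d)) \ (Finset.Icc (-(n : ℤ)) n) with hsdef
    have hmem : ∀ k ∈ s, (n : ℤ) + 1 ≤ |k| := by
      intro k hk
      rw [hsdef, Finset.mem_sdiff, Finset.mem_Icc, Finset.mem_Icc] at hk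
      rcases abs_cases k with ⟨h1, h2⟩ | ⟨h1, h2⟩ <;> omega
    calc ∑ k ∈ s, ‖fourierCoeff f k‖
        ≤ (s.card : ℝ) ^ (1 - p⁻¹) * (∑ k ∈ s, ‖fourierCoeff f k‖ ^ p) ^ p⁻¹ :=
          holder_card s _ (fun _ => norm_nonneg _) hp
      _ ≤ (2 * (d : ℝ)) ^ (1 - p⁻¹) * (M / (n : ℝ) ^ (p - 1)) ^ p⁻¹ := by
          have h1 : (s.card : ℝ) = 2 * (d : ℝ) := by
            rw [hsdef, card_annulus]; push_cast; ring
          rw [h1]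
          refine mul_le_mul_of_nonneg_left ?_ (Real.rpow_nonneg (by positivity) _)
          exact Real.rpow_le_rpow (Finset.sum_nonneg fun k _ =>
            Real.rpow_nonneg (norm_nonneg _) p) (hsum_p n hn s hmem) hpinv.le
  -- norm of difference of partial sums
  have hSdiff : ∀ (n d i : ℕ) (x : AddCircle (2 * Real.pi)), n₀ ≤ n → n ≤ i → i ≤ n + d →
      ‖Spart f i x - Spart f n x‖
        ≤ (2 * (d : ℝ)) ^ (1 - p⁻¹) * (M / (n : ℝ) ^ (p - 1)) ^ p⁻¹ := by
    intro n d i x hn hni hid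
    have hsub : Finset.Icc (-(n : ℤ)) (n : ℤ) ⊆ Finset.Icc (-(i : ℤ)) (i : ℤ) :=
      Finset.Icc_subset_Icc (by omega) (by omega)
    have h1 : ‖Spart f i x - Spart f n x‖
        ≤ ∑ k ∈ (Finset.Icc (-(i : ℤ)) (i : ℤ)) \ (Finset.Icc (-(n : ℤ)) n),
            ‖fourierCoeff f k‖ := by
      unfold Spart
      rw [← Finset.sum_sdiff_eq_sub hsub]
      refine le_trans (norm_sum_le _ _) (Finset.sum_le_sum fun k _ => ?_)
      rw [norm_smul]
      have h2 : ‖fourier k x‖ = 1 := by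
        rw [fourier_apply]; exact Circle.norm_coe _
      rw [h2, mul_one]
    refine le_trans h1 (le_trans (Finset.sum_le_sum_of_subset_of_nonneg ?_
      (fun k _ _ => norm_nonneg _)) (hannulus n d hn))
    refine Finset.sdiff_subset_sdiff (Finset.Icc_subset_Icc (by omega) (by omega)) le_rfl
  -- restated Cesàro hypothesis
  have hσ' : ∀ ε > 0, ∀ᶠ n : ℕ in atTop, ∀ x ∈ K,
      dist (g x) (((n : ℂ) + 1)⁻¹ • Ppart f n x) < ε := by
    have h := Metric.tendstoUniformlyOn_iff.mp hσ
    exact h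
  -- main step: uniform convergence of partial sums on K
  have hSK : TendstoUniformlyOn (fun n x => Spart f n x) g atTop K := by
    rw [Metric.tendstoUniformlyOn_iff]
    intro ε hε
    have hMp : (0 : ℝ) < M ^ p⁻¹ + 1 := by positivity
    obtain ⟨E, hE⟩ : ∃ E : ℝ, E = ε / (2 * (M ^ p⁻¹ + 1)) := ⟨_, rfl⟩
    have hE0 : 0 < E := by rw [hE]; positivity
    obtain ⟨lam, hlam⟩ : ∃ l : ℝ, l = E ^ (p / (p - 1)) / 4 := ⟨_, rfl⟩
    have hlam0 : 0 < lam := by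
      rw [hlam]
      exact div_pos (Real.rpow_pos_of_pos hE0 _) (by norm_num)
    obtain ⟨Cl, hCl⟩ : ∃ c : ℝ, c = 2 / lam + 3 := ⟨_, rfl⟩
    have hCl0 : 0 < Cl := by
      rw [hCl]
      have h2 := div_pos (show (0 : ℝ) < 2 by norm_num) hlam0
      linarith
    obtain ⟨ε', hε'⟩ : ∃ e : ℝ, e = ε / (2 * Cl) := ⟨_, rfl⟩
    have hε'0 : 0 < ε' := by
      rw [hε']
      exact div_pos hε (mul_pos (by norm_num) hCl0)
    obtain ⟨N, hN⟩ := eventually_atTop.mp (hσ' ε' hε'0)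
    filter_upwards [eventually_ge_atTop N, eventually_ge_atTop n₀, eventually_ge_atTop 1,
      eventually_ge_atTop ⌈1 / lam⌉₊] with n hnN hn0 hn1 hnl
    intro x hx
    obtain ⟨d, hd⟩ : ∃ d : ℕ, d = ⌊lam * n⌋₊ + 1 := ⟨_, rfl⟩
    obtain ⟨m, hm⟩ : ∃ m : ℕ, m = n + d := ⟨_, rfl⟩
    have hd1 : 1 ≤ d := by omega
    have hdpos : (0 : ℝ) < (d : ℝ) := by exact_mod_cast (show 0 < d by omega)
    have hn1R : (1 : ℝ) ≤ (n : ℝ) := by exact_mod_cast hn1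
    have hdlow : lam * n ≤ (d : ℝ) := by
      have := Nat.lt_floor_add_one (lam * n)
      rw [hd]; push_cast; linarith
    have hlamn1 : 1 ≤ lam * n := by
      have h1 : (1 / lam : ℝ) ≤ (⌈1 / lam⌉₊ : ℝ) := Nat.le_ceil _
      have h2 : ((⌈1 / lam⌉₊ : ℕ) : ℝ) ≤ (n : ℝ) := by exact_mod_cast hnl
      rw [div_le_iff₀ hlam0] at h1
      nlinarith
    have hdhigh : (d : ℝ) ≤ 2 * (lam * n) := by
      have h1 := Nat.floor_le (show 0 ≤ lam * n by positivity)
      rw [hd]; push_cast; linarith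
    have hdC : (d : ℂ) ≠ 0 := by exact_mod_cast hdpos.ne'
    obtain ⟨V, hV⟩ : ∃ v : ℂ, v = (d : ℂ)⁻¹ * (Ppart f m x - Ppart f n x) := ⟨_, rfl⟩
    -- second term: ‖Spart f n x - V‖ ≤ M^(p⁻¹) * E
    have hident : Spart f n x - V
        = (d : ℂ)⁻¹ * ∑ i ∈ Finset.Ico (n + 1) (m + 1), (Spart f n x - Spart f i x) := by
      have hP : Ppart f m x - Ppart f n x
          = ∑ i ∈ Finset.Ico (n + 1) (m + 1), Spart f i x := by
        unfold Ppart
        rw [Finset.sum_Ico_eq_sub _ (by omega)]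
      rw [hV, hP, Finset.sum_sub_distrib, Finset.sum_const, Nat.card_Ico]
      have hcard : m + 1 - (n + 1) = d := by omega
      rw [hcard, nsmul_eq_mul]
      field_simp
    have hterm2 : ‖Spart f n x - V‖ ≤ M ^ p⁻¹ * E := by
      have hB : ∀ i ∈ Finset.Ico (n + 1) (m + 1), ‖Spart f n x - Spart f i x‖
          ≤ (2 * (d : ℝ)) ^ (1 - p⁻¹) * (M / (n : ℝ) ^ (p - 1)) ^ p⁻¹ := by
        intro i hi
        rw [Finset.mem_Ico] at hi
        rw [norm_sub_rev]
        exact hSdiff n d i x hn0 (by omega) (by omega)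
      have hdnorm : ‖(d : ℂ)‖ = (d : ℝ) := by
        simp
      have hcardIco : (Finset.Ico (n + 1) (m + 1)).card = d := by
        rw [Nat.card_Ico]; omega
      have hnormsum : ‖∑ i ∈ Finset.Ico (n + 1) (m + 1), (Spart f n x - Spart f i x)‖
          ≤ (d : ℝ) * ((2 * (d : ℝ)) ^ (1 - p⁻¹) * (M / (n : ℝ) ^ (p - 1)) ^ p⁻¹) := by
        refine le_trans (norm_sum_le _ _) ?_
        calc ∑ i ∈ Finset.Ico (n + 1) (m + 1), ‖Spart f n x - Spart f i x‖
            ≤ (Finset.Ico (n + 1) (m + 1)).card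
                • ((2 * (d : ℝ)) ^ (1 - p⁻¹) * (M / (n : ℝ) ^ (p - 1)) ^ p⁻¹) :=
              Finset.sum_le_card_nsmul _ _ _ hB
          _ = (d : ℝ) * ((2 * (d : ℝ)) ^ (1 - p⁻¹) * (M / (n : ℝ) ^ (p - 1)) ^ p⁻¹) := by
              rw [hcardIco, nsmul_eq_mul]
      calc ‖Spart f n x - V‖
          = ‖(d : ℂ)⁻¹‖ * ‖∑ i ∈ Finset.Ico (n + 1) (m + 1),
              (Spart f n x - Spart f i x)‖ := by rw [hident, norm_mul]
        _ ≤ (d : ℝ)⁻¹ * ((d : ℝ)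
              * ((2 * (d : ℝ)) ^ (1 - p⁻¹) * (M / (n : ℝ) ^ (p - 1)) ^ p⁻¹)) := by
            rw [norm_inv, hdnorm]
            exact mul_le_mul_of_nonneg_left hnormsum (by positivity)
        _ = (2 * (d : ℝ)) ^ (1 - p⁻¹) * (M / (n : ℝ) ^ (p - 1)) ^ p⁻¹ := by
            field_simp
        _ ≤ M ^ p⁻¹ * E := rpow_bound hp hM hE0 hlam hn1R hdpos hdhigh
    -- first term
    have hσn := hN n hnN x hx
    have hσm := hN m (by omega) x hx
    have hnC : ((n : ℂ) + 1) ≠ 0 := Nat.cast_add_one_ne_zero n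
    have hmC : ((m : ℂ) + 1) ≠ 0 := Nat.cast_add_one_ne_zero m
    have hident2 : g x - V
        = (d : ℂ)⁻¹ * (((m : ℂ) + 1) * (g x - ((m : ℂ) + 1)⁻¹ • Ppart f m x)
            - ((n : ℂ) + 1) * (g x - ((n : ℂ) + 1)⁻¹ • Ppart f n x)) := by
      rw [hV, smul_eq_mul, smul_eq_mul]
      have hmnd : (m : ℂ) = (n : ℂ) + (d : ℂ) := by rw [hm]; push_cast; ring
      rw [hmnd] at hmC ⊢
      field_simp
      ring
    have hterm1 : ‖g x - V‖ ≤ ε / 2 := by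
      have hnn : ‖(n : ℂ) + 1‖ = (n : ℝ) + 1 := by
        have h1 : ((n : ℂ) + 1) = (((n + 1 : ℕ) : ℝ) : ℂ) := by push_cast; ring
        rw [h1, Complex.norm_real, Real.norm_eq_abs, abs_of_nonneg (by positivity)]
        push_cast; ring
      have hmm : ‖(m : ℂ) + 1‖ = (m : ℝ) + 1 := by
        have h1 : ((m : ℂ) + 1) = (((m + 1 : ℕ) : ℝ) : ℂ) := by push_cast; ring
        rw [h1, Complex.norm_real, Real.norm_eq_abs, abs_of_nonneg (by positivity)]
        push_cast; ring
      have hdist_n : ‖g x - ((n : ℂ) + 1)⁻¹ • Ppart f n x‖ ≤ ε' := by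
        rw [← dist_eq_norm]; exact hσn.le
      have hdist_m : ‖g x - ((m : ℂ) + 1)⁻¹ • Ppart f m x‖ ≤ ε' := by
        rw [← dist_eq_norm]; exact hσm.le
      have hcoef : (d : ℝ)⁻¹ * (((m : ℝ) + 1) + ((n : ℝ) + 1)) ≤ Cl := by
        rw [inv_mul_le_iff₀ hdpos]
        have e1 : 2 * (n : ℝ) ≤ 2 / lam * (d : ℝ) := by
          rw [div_mul_eq_mul_div, le_div_iff₀ hlam0]
          nlinarith
        have e2 : (1 : ℝ) ≤ (d : ℝ) := by exact_mod_cast hd1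
        have hmR : (m : ℝ) = (n : ℝ) + (d : ℝ) := by rw [hm]; push_cast; ring
        rw [hCl, hmR]
        nlinarith
      calc ‖g x - V‖
          ≤ (d : ℝ)⁻¹ * ((((m : ℝ) + 1) * ε') + (((n : ℝ) + 1) * ε')) := by
            rw [hident2, norm_mul, norm_inv]
            have hdn : ‖(d : ℂ)‖ = (d : ℝ) := by
              rw [show ((d : ℕ) : ℂ) = (((d : ℕ) : ℝ) : ℂ) by push_cast; ring,
                Complex.norm_real, Real.norm_eq_abs, abs_of_nonneg (by positivity)]
            rw [hdn]
            refine mul_le_mul_of_nonneg_left ?_ (by positivity)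
            refine le_trans (norm_sub_le _ _) ?_
            rw [norm_mul, norm_mul, hnn, hmm]
            have g1 : ((m : ℝ) + 1) * ‖g x - ((m : ℂ) + 1)⁻¹ • Ppart f m x‖
                ≤ ((m : ℝ) + 1) * ε' := by
              exact mul_le_mul_of_nonneg_left hdist_m (by positivity)
            have g2 : ((n : ℝ) + 1) * ‖g x - ((n : ℂ) + 1)⁻¹ • Ppart f n x‖
                ≤ ((n : ℝ) + 1) * ε' := by
              exact mul_le_mul_of_nonneg_left hdist_n (by positivity)
            linarith
        _ = ((d : ℝ)⁻¹ * (((m : ℝ) + 1) + ((n : ℝ) + 1))) * ε' := by ring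
        _ ≤ Cl * ε' := mul_le_mul_of_nonneg_right hcoef hε'0.le
        _ = ε / 2 := by
            rw [hε']; field_simp
    -- conclude
    have hfinal : M ^ p⁻¹ * E ≤ ε / 2 - E := by
      have h1 : (M ^ p⁻¹ + 1) * E = ε / 2 := by
        rw [hE]; field_simp
      nlinarith
    have : dist (g x) (Spart f n x) ≤ ‖g x - V‖ + ‖Spart f n x - V‖ := by
      rw [dist_eq_norm]
      have : g x - Spart f n x = (g x - V) - (Spart f n x - V) := by ring
      rw [this]
      exact norm_sub_le _ _
    calc dist (g x) (Spart f n x) ≤ ‖g x - V‖ + ‖Spart f n x - V‖ := this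
      _ ≤ ε / 2 + (ε / 2 - E) := add_le_add hterm1 (le_trans hterm2 hfinal)
      _ < ε := by linarith
  -- extend to the closure
  have hcauchy : UniformCauchySeqOn (fun n x => Spart f n x) atTop K := hSK.uniformCauchySeqOn
  have hcauchy' : UniformCauchySeqOn (fun n x => Spart f n x) atTop (closure K) := by
    rw [Metric.uniformCauchySeqOn_iff] at hcauchy ⊢
    intro ε hε
    obtain ⟨N, hN⟩ := hcauchy (ε / 2) (half_pos hε)
    refine ⟨N, fun a ha b hb x hx => ?_⟩
    have hclosed : IsClosed {y | dist (Spart f a y) (Spart f b y) ≤ ε / 2} :=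
      isClosed_le (Continuous.dist (hcont a) (hcont b)) continuous_const
    have hKsub : K ⊆ {y | dist (Spart f a y) (Spart f b y) ≤ ε / 2} :=
      fun y hy => (hN a ha b hb y hy).le
    have := hclosed.closure_subset_iff.mpr hKsub hx
    calc dist (Spart f a x) (Spart f b x) ≤ ε / 2 := this
      _ < ε := by linarith
  have hptwise : ∀ x, x ∈ closure K → ∃ l : ℂ, Tendsto (fun n => Spart f n x) atTop (𝓝 l) :=
    fun x hx => cauchySeq_tendsto_of_complete (hcauchy'.cauchySeq hx)
  set h : AddCircle (2 * Real.pi) → ℂ := fun x =>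
    if hx : x ∈ closure K then (hptwise x hx).choose else 0 with hhdef
  refine ⟨h, ?_⟩
  have : TendstoUniformlyOn (fun n x => Spart f n x) h atTop (closure K) := by
    refine hcauchy'.tendstoUniformlyOn_of_tendsto fun x hx => ?_
    rw [hhdef]
    simp only [hx, dif_pos]
    exact (hptwise x hx).choose_spec
  exact this
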